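/- Let ζ be a primitive 42nd root of unity, 𝒪_K the ring of integers of K = ℚ(ζ), and π₁ = −ζ⁸ + ζ⁶ − ζ⁴ + ζ. Then ζ + 2 lies in the ideal (π₁) but not in (π₁)²; that is, v_{(π₁)}(ζ + 2) = 1. -/

import Mathlib

open NumberField

open Polynomial in
private lemma cyclo_facts :
    cyclotomic 6 ℚ = X ^ 2 - X + 1 ∧
    cyclotomic 7 ℚ = X ^ 6 + X ^ 5 + X ^ 4 + X ^ 3 + X ^ 2 + X + 1 ∧
    cyclotomic 14 ℚ = X ^ 6 - X ^ 5 + X ^ 4 - X ^ 3 + X ^ 2 - X + 1 ∧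
    cyclotomic 21 ℚ = X ^ 12 - X ^ 11 + X ^ 9 - X ^ 8 + X ^ 6 - X ^ 4 + X ^ 3 - X + 1 ∧
    cyclotomic 42 ℚ = X ^ 12 + X ^ 11 - X ^ 9 - X ^ 8 + X ^ 6 - X ^ 4 - X ^ 3 + X + 1 := by
  haveI f3 : Fact (Nat.Prime 3) := ⟨by norm_num⟩
  haveI f7 : Fact (Nat.Prime 7) := ⟨by norm_num⟩
  have c3 : cyclotomic 3 ℚ = X ^ 2 + X + 1 := by
    rw [cyclotomic_prime]
    simp [Finset.sum_range_succ]
    ring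
  have c7 : cyclotomic 7 ℚ = X ^ 6 + X ^ 5 + X ^ 4 + X ^ 3 + X ^ 2 + X + 1 := by
    rw [cyclotomic_prime]
    simp [Finset.sum_range_succ]
    ring
  have c6 : cyclotomic 6 ℚ = X ^ 2 - X + 1 := by
    have h := cyclotomic_expand_eq_cyclotomic_mul (R := ℚ) Nat.prime_two
      (by norm_num : ¬ (2:ℕ) ∣ 3)
    rw [(by norm_num : (3:ℕ) * 2 = 6), c3] at h
    simp only [map_add, map_sub, map_pow, map_one, expand_X] at h
    have hne : ((cyclotomic 3 ℚ : Polynomial ℚ)) ≠ 0 := cyclotomic_ne_zero 3 ℚ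
    rw [c3] at hne
    apply mul_right_cancel₀ hne
    linear_combination -h
  have c14 : cyclotomic 14 ℚ = X ^ 6 - X ^ 5 + X ^ 4 - X ^ 3 + X ^ 2 - X + 1 := by
    have h := cyclotomic_expand_eq_cyclotomic_mul (R := ℚ) Nat.prime_two
      (by norm_num : ¬ (2:ℕ) ∣ 7)
    rw [(by norm_num : (7:ℕ) * 2 = 14), c7] at h
    simp only [map_add, map_sub, map_pow, map_one, expand_X] at h
    have hne : ((cyclotomic 7 ℚ : Polynomial ℚ)) ≠ 0 := cyclotomic_ne_zero 7 ℚ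
    rw [c7] at hne
    apply mul_right_cancel₀ hne
    linear_combination -h
  have c21 : cyclotomic 21 ℚ = X ^ 12 - X ^ 11 + X ^ 9 - X ^ 8 + X ^ 6 - X ^ 4 + X ^ 3 - X + 1 := by
    have h := cyclotomic_expand_eq_cyclotomic_mul (R := ℚ) Nat.prime_three
      (by norm_num : ¬ (3:ℕ) ∣ 7)
    rw [(by norm_num : (7:ℕ) * 3 = 21), c7] at h
    simp only [map_add, map_sub, map_pow, map_one, expand_X] at h
    have hne : ((cyclotomic 7 ℚ : Polynomial ℚ)) ≠ 0 := cyclotomic_ne_zero 7 ℚ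
    rw [c7] at hne
    apply mul_right_cancel₀ hne
    linear_combination -h
  have c42 : cyclotomic 42 ℚ = X ^ 12 + X ^ 11 - X ^ 9 - X ^ 8 + X ^ 6 - X ^ 4 - X ^ 3 + X + 1 := by
    have h := cyclotomic_expand_eq_cyclotomic_mul (R := ℚ) Nat.prime_two
      (by norm_num : ¬ (2:ℕ) ∣ 21)
    rw [(by norm_num : (21:ℕ) * 2 = 42), c21] at h
    simp only [map_add, map_sub, map_pow, map_one, expand_X] at h
    have hne : ((cyclotomic 21 ℚ : Polynomial ℚ)) ≠ 0 := cyclotomic_ne_zero 21 ℚ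
    rw [c21] at hne
    apply mul_right_cancel₀ hne
    linear_combination -h
  exact ⟨c6, c7, c14, c21, c42⟩

open IntermediateField in
private lemma tr_aux {K : Type*} [Field K] [NumberField K] (x : K) (p : Polynomial ℚ)
    (hmin : minpoly ℚ x = p) (d e : ℕ) (hd0 : 0 < d) (hd : p.natDegree = d)
    (hde : Module.finrank ℚ K = d * e) (c : ℚ) (hc : p.nextCoeff = c) :
    Algebra.trace ℚ K x = e * (-c) := by
  have hint : IsIntegral ℚ x := IsIntegral.of_finite ℚ x
  haveI : FiniteDimensional ℚ⟮x⟯ K := FiniteDimensional.right ℚ ℚ⟮x⟯ K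
  have hLd : Module.finrank ℚ ℚ⟮x⟯ = d := by
    rw [IntermediateField.adjoin.finrank hint, hmin, hd]
  have hmul := Module.finrank_mul_finrank ℚ ℚ⟮x⟯ K
  rw [hLd, hde] at hmul
  have hLK : Module.finrank ℚ⟮x⟯ K = e := Nat.eq_of_mul_eq_mul_left hd0 hmul
  have hx : algebraMap ℚ⟮x⟯ K (AdjoinSimple.gen ℚ x) = x :=
    IntermediateField.AdjoinSimple.algebraMap_gen ℚ x
  have h2 : Algebra.trace ℚ ℚ⟮x⟯ (AdjoinSimple.gen ℚ x) = -c := by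
    have h := PowerBasis.trace_gen_eq_nextCoeff_minpoly (IntermediateField.adjoin.powerBasis hint)
    rw [IntermediateField.adjoin.powerBasis_gen] at h
    refine h.trans ?_
    rw [IntermediateField.minpoly_gen, hmin, hc]
  calc Algebra.trace ℚ K x
      = Algebra.trace ℚ K (algebraMap ℚ⟮x⟯ K (AdjoinSimple.gen ℚ x)) := by rw [hx]
    _ = Algebra.trace ℚ ℚ⟮x⟯
          (Algebra.trace ℚ⟮x⟯ K (algebraMap ℚ⟮x⟯ K (AdjoinSimple.gen ℚ x))) :=
        (Algebra.trace_trace _).symm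
    _ = Algebra.trace ℚ ℚ⟮x⟯ (e • AdjoinSimple.gen ℚ x) := by
        rw [Algebra.trace_algebraMap, hLK]
    _ = e • Algebra.trace ℚ ℚ⟮x⟯ (AdjoinSimple.gen ℚ x) := map_nsmul _ _ _
    _ = e * (-c) := by rw [h2]; simp [nsmul_eq_mul]

set_option maxHeartbeats 2000000 in
theorem valuation_of_zeta_add_two_eq_one
    (K : Type*) [Field K] [NumberField K]
    [IsCyclotomicExtension {(42 : ℕ)} ℚ K]
    (ζ : 𝓞 K) (hζ : IsPrimitiveRoot ζ 42)
    (π₁ : 𝓞 K) (hπ₁ : π₁ = -ζ ^ 8 + ζ ^ 6 - ζ ^ 4 + ζ) :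
    ζ + 2 ∈ Ideal.span {π₁} ∧ ζ + 2 ∉ Ideal.span {π₁} ^ 2 := by
  obtain ⟨c6, c7, c14, c21, c42⟩ := cyclo_facts
  -- the minimal polynomial relation for ζ in 𝓞 K
  have h42 : ζ ^ 42 = 1 := hζ.pow_eq_one
  have h21 : ζ ^ 21 = -1 := by
    have hsq : (ζ ^ 21 - 1) * (ζ ^ 21 + 1) = 0 := by linear_combination h42
    rcases mul_eq_zero.mp hsq with h | h
    · exact absurd (by linear_combination h)
        (hζ.pow_ne_one_of_pos_of_lt (by norm_num) (by norm_num : 21 < 42))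
    · linear_combination h
  have h7ne : ζ ^ 7 ≠ -1 := by
    intro h
    exact hζ.pow_ne_one_of_pos_of_lt (by norm_num) (by norm_num : 14 < 42)
      (by rw [show ζ ^ 14 = (ζ ^ 7) ^ 2 by ring, h]; ring)
  have hf : ζ ^ 14 - ζ ^ 7 + 1 = 0 := by
    have hm : (ζ ^ 7 + 1) * (ζ ^ 14 - ζ ^ 7 + 1) = 0 := by linear_combination h21
    rcases mul_eq_zero.mp hm with h | h
    · exact absurd (by linear_combination h) h7ne
    · exact h
  have hz3 : ζ ^ 2 - ζ + 1 ≠ 0 := by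
    intro h
    have h3 : ζ ^ 3 = -1 := by linear_combination (ζ + 1) * h
    exact hζ.pow_ne_one_of_pos_of_lt (by norm_num) (by norm_num : 6 < 42)
      (by rw [show ζ ^ 6 = (ζ ^ 3) ^ 2 by ring, h3]; ring)
  have hΦ : ζ ^ 12 + ζ ^ 11 - ζ ^ 9 - ζ ^ 8 + ζ ^ 6 - ζ ^ 4 - ζ ^ 3 + ζ + 1 = 0 := by
    have hm : (ζ ^ 2 - ζ + 1) *
        (ζ ^ 12 + ζ ^ 11 - ζ ^ 9 - ζ ^ 8 + ζ ^ 6 - ζ ^ 4 - ζ ^ 3 + ζ + 1) = 0 := by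
      linear_combination hf
    exact (mul_eq_zero.mp hm).resolve_left hz3
  -- Part 1: membership
  have hu : ζ + 2 = π₁ * (ζ + ζ ^ 2 + (-1) * ζ ^ 5 + ζ ^ 7 + ζ ^ 8 + ζ ^ 9 + ζ ^ 10) := by
    rw [hπ₁]
    linear_combination (-((-2 : 𝓞 K) + ζ + (-1) * ζ ^ 3 + (-1) * ζ ^ 6)) * hΦ
  refine ⟨Ideal.mem_span_singleton.mpr ⟨_, hu⟩, ?_⟩
  -- Part 2: non-membership
  intro hmem
  rw [Ideal.span_singleton_pow, Ideal.mem_span_singleton] at hmem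
  obtain ⟨t, ht⟩ := hmem
  -- move to K
  set zK : K := algebraMap (𝓞 K) K ζ with hzK
  have hζK : IsPrimitiveRoot zK 42 :=
    hζ.map_of_injective RingOfIntegers.coe_injective
  have hΦK : zK ^ 12 + zK ^ 11 - zK ^ 9 - zK ^ 8 + zK ^ 6 - zK ^ 4 - zK ^ 3 + zK + 1 = 0 := by
    have := congrArg (algebraMap (𝓞 K) K) hΦ
    simpa only [map_add, map_sub, map_pow, map_one, map_zero] using this
  set tK : K := algebraMap (𝓞 K) K t with htK'
  set pK : K := algebraMap (𝓞 K) K π₁ with hpK'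
  have htK : zK + 2 = pK ^ 2 * tK := by
    have := congrArg (algebraMap (𝓞 K) K) ht
    simpa only [map_add, map_mul, map_pow, map_ofNat] using this
  have hpK : pK = -zK ^ 8 + zK ^ 6 - zK ^ 4 + zK := by
    have := congrArg (algebraMap (𝓞 K) K) hπ₁
    simpa only [map_add, map_sub, map_neg, map_pow] using this
  -- γ and the element identities in K
  set gK : K := (-1 : _) + 3 * zK + 2 * zK ^ 2 + zK ^ 4 + (-4) * zK ^ 5 + zK ^ 6 + 3 * zK ^ 7 +
      3 * zK ^ 8 + 3 * zK ^ 9 + 2 * zK ^ 10 + (-2) * zK ^ 11 with hgK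
  have hγ : pK * gK = 7 := by
    rw [hpK, hgK]
    linear_combination ((-7 : K) + 6 * zK + (-3) * zK ^ 2 + (-2) * zK ^ 3 + 2 * zK ^ 4 +
      (-1) * zK ^ 5 + (-4) * zK ^ 6 + 2 * zK ^ 7) * hΦK
  set A2 : K := 7 + 7 * zK + (-14) * zK ^ 2 + (-7) * zK ^ 3 + (-28) * zK ^ 4 + (-14) * zK ^ 5 +
      (-21) * zK ^ 6 + 7 * zK ^ 7 + 28 * zK ^ 8 + 42 * zK ^ 9 + 42 * zK ^ 10 + 28 * zK ^ 11
    with hA2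
  have e2 : gK * gK = A2 := by
    rw [hgK, hA2]
    linear_combination ((-6 : K) + (-7) * zK + 26 * zK ^ 2 + (-13) * zK ^ 3 + 30 * zK ^ 4 +
      17 * zK ^ 5 + zK ^ 6 + 4 * zK ^ 8 + (-12) * zK ^ 9 + 4 * zK ^ 10) * hΦK
  set A4 : K := (-343 : _) + 1029 * zK + 1715 * zK ^ 2 + 1029 * zK ^ 3 + (-2401) * zK ^ 4 +
      (-6174) * zK ^ 5 + (-6860) * zK ^ 6 + (-3773) * zK ^ 7 + 1029 * zK ^ 8 + 3087 * zK ^ 9 +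
      2744 * zK ^ 10 + 1029 * zK ^ 11 with hA4
  have e4 : A2 * A2 = A4 := by
    rw [hA2, hA4]
    linear_combination ((392 : K) + (-1323) * zK + (-539) * zK ^ 2 + (-392) * zK ^ 3 +
      1568 * zK ^ 4 + 2352 * zK ^ 5 + 3528 * zK ^ 6 + 3332 * zK ^ 7 + 2548 * zK ^ 8 +
      1568 * zK ^ 9 + 784 * zK ^ 10) * hΦK
  set A8 : K := (-34824104 : _) + (-38471223) * zK + 25176886 * zK ^ 2 + 109648868 * zK ^ 3 +
      124943238 * zK ^ 4 + 31059336 * zK ^ 5 + (-107413537) * zK ^ 6 + (-134002211) * zK ^ 7 +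
      (-49530229) * zK ^ 8 + 55647977 * zK ^ 9 + 90119134 * zK ^ 10 + 49530229 * zK ^ 11
    with hA8
  have e8 : A4 * A4 = A8 := by
    rw [hA4, hA8]
    linear_combination ((34941753 : K) + 2823576 * zK + (-28118111) * zK ^ 2 +
      (-43765428) * zK ^ 3 + (-36706488) * zK ^ 4 + (-16823807) * zK ^ 5 + 2235331 * zK ^ 6 +
      10823708 * zK ^ 7 + 9294271 * zK ^ 8 + 4588311 * zK ^ 9 + 1058841 * zK ^ 10) * hΦK
  set A12 : K := (-873978420406 : _) + (-1703890701968) * zK + (-1122839114775) * zK ^ 2 +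
      1020018124139 * zK ^ 3 + 3109487540992 * zK ^ 4 + 3084629719080 * zK ^ 5 +
      474558418320 * zK ^ 6 + (-2005009317402) * zK ^ 7 + (-2559508231189) * zK ^ 8 +
      (-1355881195200) * zK ^ 9 + 33049604133 * zK ^ 10 + 393770497106 * zK ^ 11 with hA12
  have e12 : A8 * A4 = A12 := by
    rw [hA4, hA8, hA12]
    linear_combination ((885923088078 : K) + 795329240363 * zK + 219563975687 * zK ^ 2 +
      (-467173708239) * zK ^ 3 + (-803884205047) * zK ^ 4 + (-626610809496) * zK ^ 5 +
      (-169606210221) * zK ^ 6 + 202090863856 * zK ^ 7 + 279771557331 * zK ^ 8 +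
      177676931621 * zK ^ 9 + 50966605641 * zK ^ 10) * hΦK
  have key : (13841287201 : ℚ) • tK ^ 6 =
      (194191282103287 : ℚ) • (1 : K) + (11041392532912 : ℚ) • zK ^ 1 +
      (-599242710753351 : ℚ) • zK ^ 2 + (-995750110546912 : ℚ) • zK ^ 3 +
      (-510253120684636 : ℚ) • zK ^ 4 + (732587694321042 : ℚ) • zK ^ 5 +
      (1739691615026260 : ℚ) • zK ^ 6 + (1307082183559005 : ℚ) • zK ^ 7 +
      (-17264039793133 : ℚ) • zK ^ 8 + (-1065866116853692 : ℚ) • zK ^ 9 +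
      (-1138584285154260 : ℚ) • zK ^ 10 + (-518625122114498 : ℚ) • zK ^ 11 := by
    have step : (13841287201 : ℚ) • tK ^ 6 = A12 * (zK + 2) ^ 6 := by
      have h1 : (13841287201 : ℚ) • tK ^ 6 = (pK * gK) ^ 12 * tK ^ 6 := by
        rw [hγ, Algebra.smul_def, map_ofNat]
        norm_num
      rw [h1, show (pK * gK) ^ 12 * tK ^ 6 = gK ^ 12 * (pK ^ 2 * tK) ^ 6 by ring, ← htK,
        show gK ^ 12 = ((gK * gK) * (gK * gK)) * ((gK * gK) * (gK * gK)) *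
          ((gK * gK) * (gK * gK)) by ring, e2,
        show A2 * A2 * (A2 * A2) * (A2 * A2) = (A2 * A2) * (A2 * A2) * (A2 * A2) by ring, e4,
        show A4 * A4 * A4 = (A4 * A4) * A4 by ring, e8, e12]
    rw [step, hA12]
    simp only [Algebra.smul_def, map_ofNat, map_neg]
    linear_combination ((-250125901009271 : K) + (-37768353167545) * zK +
      28247524900000 * zK ^ 2 + 18302418808457 * zK ^ 3 + 4364525072299 * zK ^ 4 +
      393770497106 * zK ^ 5) * hΦK
  -- trace values
  have hrank : Module.finrank ℚ K = 12 := by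
    have h := IsCyclotomicExtension.finrank (n := 42) K
      (Polynomial.cyclotomic.irreducible_rat (by norm_num))
    rw [h]; decide
  have hcm : ∀ n : ℕ, (0:ℕ) < n → IsPrimitiveRoot zK n → Polynomial.cyclotomic n ℚ =
      minpoly ℚ zK := fun n h hn => Polynomial.cyclotomic_eq_minpoly_rat hn h
  -- primitivity of powers
  have hp2 : IsPrimitiveRoot (zK ^ 2) 21 := hζK.pow (by norm_num) (by norm_num : 42 = 21 * 2)
  have hp3 : IsPrimitiveRoot (zK ^ 3) 14 := hζK.pow (by norm_num) (by norm_num : 42 = 14 * 3)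
  have hp6 : IsPrimitiveRoot (zK ^ 6) 7 := hζK.pow (by norm_num) (by norm_num : 42 = 7 * 6)
  have hp7 : IsPrimitiveRoot (zK ^ 7) 6 := hζK.pow (by norm_num) (by norm_num : 42 = 6 * 7)
  have hp4 : IsPrimitiveRoot (zK ^ 4) 21 := by
    have := hp2.pow_of_coprime 2 (by norm_num)
    rwa [← pow_mul] at this
  have hp8 : IsPrimitiveRoot (zK ^ 8) 21 := by
    have := hp2.pow_of_coprime 4 (by norm_num)
    rwa [← pow_mul] at this
  have hp10 : IsPrimitiveRoot (zK ^ 10) 21 := by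
    have := hp2.pow_of_coprime 5 (by norm_num)
    rwa [← pow_mul] at this
  have hp9 : IsPrimitiveRoot (zK ^ 9) 14 := by
    have := hp3.pow_of_coprime 3 (by norm_num)
    rwa [← pow_mul] at this
  have hp5 : IsPrimitiveRoot (zK ^ 5) 42 := hζK.pow_of_coprime 5 (by norm_num)
  have hp11 : IsPrimitiveRoot (zK ^ 11) 42 := hζK.pow_of_coprime 11 (by norm_num)
  -- natDegree and nextCoeff of the explicit cyclotomic polynomials
  open Polynomial in
  have nd42 : (X ^ 12 + X ^ 11 - X ^ 9 - X ^ 8 + X ^ 6 - X ^ 4 - X ^ 3 + X + 1 :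
      Polynomial ℚ).natDegree = 12 := by compute_degree!
  open Polynomial in
  have nc42 : (X ^ 12 + X ^ 11 - X ^ 9 - X ^ 8 + X ^ 6 - X ^ 4 - X ^ 3 + X + 1 :
      Polynomial ℚ).nextCoeff = 1 := by
    rw [Polynomial.nextCoeff_of_natDegree_pos (by rw [nd42]; norm_num), nd42]
    norm_num [Polynomial.coeff_one, Polynomial.coeff_X]
  open Polynomial in
  have nd21 : (X ^ 12 - X ^ 11 + X ^ 9 - X ^ 8 + X ^ 6 - X ^ 4 + X ^ 3 - X + 1 :
      Polynomial ℚ).natDegree = 12 := by compute_degree!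
  open Polynomial in
  have nc21 : (X ^ 12 - X ^ 11 + X ^ 9 - X ^ 8 + X ^ 6 - X ^ 4 + X ^ 3 - X + 1 :
      Polynomial ℚ).nextCoeff = -1 := by
    rw [Polynomial.nextCoeff_of_natDegree_pos (by rw [nd21]; norm_num), nd21]
    norm_num [Polynomial.coeff_one, Polynomial.coeff_X]
  open Polynomial in
  have nd14 : (X ^ 6 - X ^ 5 + X ^ 4 - X ^ 3 + X ^ 2 - X + 1 :
      Polynomial ℚ).natDegree = 6 := by compute_degree!
  open Polynomial in
  have nc14 : (X ^ 6 - X ^ 5 + X ^ 4 - X ^ 3 + X ^ 2 - X + 1 :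
      Polynomial ℚ).nextCoeff = -1 := by
    rw [Polynomial.nextCoeff_of_natDegree_pos (by rw [nd14]; norm_num), nd14]
    norm_num [Polynomial.coeff_one, Polynomial.coeff_X]
  open Polynomial in
  have nd7 : (X ^ 6 + X ^ 5 + X ^ 4 + X ^ 3 + X ^ 2 + X + 1 :
      Polynomial ℚ).natDegree = 6 := by compute_degree!
  open Polynomial in
  have nc7 : (X ^ 6 + X ^ 5 + X ^ 4 + X ^ 3 + X ^ 2 + X + 1 :
      Polynomial ℚ).nextCoeff = 1 := by
    rw [Polynomial.nextCoeff_of_natDegree_pos (by rw [nd7]; norm_num), nd7]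
    norm_num [Polynomial.coeff_one, Polynomial.coeff_X]
  open Polynomial in
  have nd6 : (X ^ 2 - X + 1 : Polynomial ℚ).natDegree = 2 := by compute_degree!
  open Polynomial in
  have nc6 : (X ^ 2 - X + 1 : Polynomial ℚ).nextCoeff = -1 := by
    rw [Polynomial.nextCoeff_of_natDegree_pos (by rw [nd6]; norm_num), nd6]
    norm_num [Polynomial.coeff_one, Polynomial.coeff_X]
  -- trace values
  have tau0 : Algebra.trace ℚ K (1 : K) = 12 := by
    rw [show (1:K) = algebraMap ℚ K 1 from (map_one _).symm, Algebra.trace_algebraMap, hrank]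
    norm_num
  have tr42 : ∀ x : K, IsPrimitiveRoot x 42 → Algebra.trace ℚ K x = -1 := by
    intro x hx
    have h := tr_aux x _ ((Polynomial.cyclotomic_eq_minpoly_rat hx (by norm_num)).symm.trans c42)
      12 1 (by norm_num) nd42 (by rw [hrank]) 1 nc42
    simpa using h
  have tr21 : ∀ x : K, IsPrimitiveRoot x 21 → Algebra.trace ℚ K x = 1 := by
    intro x hx
    have h := tr_aux x _ ((Polynomial.cyclotomic_eq_minpoly_rat hx (by norm_num)).symm.trans c21)
      12 1 (by norm_num) nd21 (by rw [hrank]) (-1) nc21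
    simpa using h
  have tr14 : ∀ x : K, IsPrimitiveRoot x 14 → Algebra.trace ℚ K x = 2 := by
    intro x hx
    have h := tr_aux x _ ((Polynomial.cyclotomic_eq_minpoly_rat hx (by norm_num)).symm.trans c14)
      6 2 (by norm_num) nd14 (by rw [hrank]) (-1) nc14
    simpa using h
  have tr7 : ∀ x : K, IsPrimitiveRoot x 7 → Algebra.trace ℚ K x = -2 := by
    intro x hx
    have h := tr_aux x _ ((Polynomial.cyclotomic_eq_minpoly_rat hx (by norm_num)).symm.trans c7)
      6 2 (by norm_num) nd7 (by rw [hrank]) 1 nc7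
    simpa using h
  have tr6 : ∀ x : K, IsPrimitiveRoot x 6 → Algebra.trace ℚ K x = 6 := by
    intro x hx
    have h := tr_aux x _ ((Polynomial.cyclotomic_eq_minpoly_rat hx (by norm_num)).symm.trans c6)
      2 6 (by norm_num) nd6 (by rw [hrank]) (-1) nc6
    simpa using h
  have tau1 : Algebra.trace ℚ K (zK ^ 1) = -1 := by rw [pow_one]; exact tr42 zK hζK
  have tau2 : Algebra.trace ℚ K (zK ^ 2) = 1 := tr21 _ hp2
  have tau3 : Algebra.trace ℚ K (zK ^ 3) = 2 := tr14 _ hp3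
  have tau4 : Algebra.trace ℚ K (zK ^ 4) = 1 := tr21 _ hp4
  have tau5 : Algebra.trace ℚ K (zK ^ 5) = -1 := tr42 _ hp5
  have tau6 : Algebra.trace ℚ K (zK ^ 6) = -2 := tr7 _ hp6
  have tau7 : Algebra.trace ℚ K (zK ^ 7) = 6 := tr6 _ hp7
  have tau8 : Algebra.trace ℚ K (zK ^ 8) = 1 := tr21 _ hp8
  have tau9 : Algebra.trace ℚ K (zK ^ 9) = 2 := tr14 _ hp9
  have tau10 : Algebra.trace ℚ K (zK ^ 10) = 1 := tr21 _ hp10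
  have tau11 : Algebra.trace ℚ K (zK ^ 11) = -1 := tr42 _ hp11
  -- the trace of t ^ 6 is an integer
  have hzint : ∃ z : ℤ, Algebra.trace ℚ K (tK ^ 6) = (z : ℚ) := by
    have h1 : IsIntegral ℤ (tK ^ 6) := by
      rw [htK', ← map_pow]
      exact RingOfIntegers.isIntegral_coe _
    have h2 := Algebra.isIntegral_trace (R := ℤ) (L := ℚ) (F := K) h1
    obtain ⟨z, hz⟩ := IsIntegrallyClosed.isIntegral_iff.mp h2
    exact ⟨z, by rw [← hz]; simp⟩
  obtain ⟨z, hz⟩ := hzint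
  -- apply the trace to the key identity
  have trkey := congrArg (Algebra.trace ℚ K) key
  simp only [map_add, map_smul] at trkey
  rw [tau0, tau1, tau2, tau3, tau4, tau5, tau6, tau7, tau8, tau9, tau10, tau11, hz] at trkey
  simp only [smul_eq_mul] at trkey
  norm_num at trkey
  have hfin : (13841287201 : ℤ) * z = 79824680614910 := by exact_mod_cast trkey
  omega
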